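/- Discrete-time hitting time tail upper bound: Let (Ω, ℱ, ℙ) be a probability space and (X_n)_{n≥1} an i.i.d. sequence of random variables with ℙ(X_n = 1) = p and ℙ(X_n = −1) = q = 1 − p, where 1/2 ≤ p ≤ 1. Define the random walk V_0 = 1 and V_n = 1 + Σ_{k=1}^{n} X_k, and the hitting time γ = inf{n ≥ 0 : V_n = 0} (with γ = ∞ if V never hits 0). Then for every integer m ≥ 1, ℙ(γ < ∞ and γ ≥ 2m + 1) ≤ (1/√π) · (2q/√m) · (1 + 1/(2(m+1))). -/

import Mathlib

open MeasureTheory ProbabilityTheory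
open DyckStep



section AuxR
open Real Nat

lemma stirling_ge (n : ℕ) (hn : 1 ≤ n) : Real.sqrt Real.pi ≤ Stirling.stirlingSeq n := by
  obtain ⟨k, rfl⟩ := Nat.exists_eq_add_of_le hn
  refine le_of_tendsto Stirling.tendsto_stirlingSeq_sqrt_pi ?_
  filter_upwards [Filter.eventually_ge_atTop (1 + k)] with j hj
  obtain ⟨i, rfl⟩ := Nat.exists_eq_add_of_le hj
  have := Stirling.stirlingSeq'_antitone (Nat.le_add_right k i)
  simpa [Function.comp, Nat.succ_eq_add_one, Nat.add_comm, Nat.add_assoc, Nat.add_left_comm] using this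

lemma stirling_mono {a b : ℕ} (ha : 1 ≤ a) (hab : a ≤ b) :
    Stirling.stirlingSeq b ≤ Stirling.stirlingSeq a := by
  obtain ⟨k, rfl⟩ := Nat.exists_eq_add_of_le ha
  obtain ⟨i, rfl⟩ := Nat.exists_eq_add_of_le hab
  have := Stirling.stirlingSeq'_antitone (Nat.le_add_right k i)
  simpa [Function.comp, Nat.succ_eq_add_one, Nat.add_comm, Nat.add_assoc, Nat.add_left_comm] using this

lemma centralBinom_le (n : ℕ) (hn : 1 ≤ n) :
    (Nat.centralBinom n : ℝ) ≤ 4 ^ n / (Real.sqrt Real.pi * Real.sqrt n) := by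
  have hs : (0:ℝ) < Real.sqrt n := Real.sqrt_pos.mpr (by exact_mod_cast hn)
  have hπ : (0:ℝ) < Real.sqrt Real.pi := Real.sqrt_pos.mpr Real.pi_pos
  have hA := stirling_ge n hn
  have hA2 := stirling_ge (2*n) (by omega)
  have hBA : Stirling.stirlingSeq (2*n) ≤ Stirling.stirlingSeq n := stirling_mono hn (by omega)
  set A := Stirling.stirlingSeq n with hAdef
  set B := Stirling.stirlingSeq (2*n) with hBdef
  have hApos : 0 < A := lt_of_lt_of_le hπ hA
  have hBpos : 0 < B := lt_of_lt_of_le hπ hA2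
  have hfact : ∀ k : ℕ, 1 ≤ k → (k ! : ℝ) = Stirling.stirlingSeq k * (Real.sqrt (2*k) * ((k:ℝ)/Real.exp 1)^k) := by
    intro k hk
    have hk0 : (0:ℝ) < (k:ℝ) := by exact_mod_cast hk
    have hd : (0:ℝ) < Real.sqrt (2*k) * ((k:ℝ)/Real.exp 1)^k := by
      apply mul_pos (Real.sqrt_pos.mpr (by positivity)) (pow_pos (by positivity) k)
    rw [Stirling.stirlingSeq]
    field_simp
  have h1 : (n ! : ℝ) = A * (Real.sqrt (2*n) * ((n:ℝ)/Real.exp 1)^n) := hfact n hn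
  have h2 : ((2*n) ! : ℝ) = B * (Real.sqrt (2*(2*n:ℕ)) * (((2*n:ℕ):ℝ)/Real.exp 1)^(2*n)) :=
    hfact (2*n) (by omega)
  set s := Real.sqrt n with hsdef
  set P := ((n:ℝ)/Real.exp 1)^n with hPdef
  have hP : 0 < P := pow_pos (by positivity) n
  have hn0 : (0:ℝ) < (n:ℝ) := by exact_mod_cast hn
  have e1 : Real.sqrt (2*((2*n:ℕ):ℝ)) = 2 * s := by
    push_cast
    rw [show 2*(2*(n:ℝ)) = 2^2 * (n:ℝ) by ring, Real.sqrt_mul (by positivity),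
      Real.sqrt_sq (by norm_num)]
  have e2 : Real.sqrt (2*(n:ℝ)) = Real.sqrt 2 * s := Real.sqrt_mul (by norm_num) _
  have e3 : (((2*n:ℕ):ℝ)/Real.exp 1)^(2*n) = 4^n * P^2 := by
    push_cast
    rw [show (2*(n:ℝ))/Real.exp 1 = 2 * ((n:ℝ)/Real.exp 1) by ring, mul_pow, hPdef, ← pow_mul,
      show (4:ℝ)^n = 2^(2*n) by rw [pow_mul]; norm_num,
      show n*2 = 2*n by ring]
  have key : (Nat.centralBinom n : ℝ) = B / A^2 * (4^n / s) := by
    have hch : (Nat.centralBinom n : ℝ) = ((2*n)! : ℝ) / ((n ! : ℝ) * (n ! :ℝ)) := by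
      have hnn : 2*n - n = n := by omega
      rw [Nat.centralBinom, Nat.cast_choose ℝ (by omega : n ≤ 2*n), hnn]
    rw [hch, h1, h2, e1, e2, e3]
    have h2' : Real.sqrt 2 > 0 := by positivity
    have hsq : Real.sqrt 2 ^ 2 = 2 := Real.sq_sqrt (by norm_num)
    have hs0 : 0 < s := Real.sqrt_pos.mpr hn0
    have hss : s^2 = (n:ℝ) := Real.sq_sqrt hn0.le
    have hden : (A * (Real.sqrt 2 * s * P))^2 = A^2 * ((Real.sqrt 2)^2 * (s^2 * P^2)) := by ring
    have hmm : (A * (Real.sqrt 2 * s * P)) * (A * (Real.sqrt 2 * s * P)) = A^2 * (2 * (s^2 * P^2)) := by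
      rw [← sq, hden, hsq]
    rw [hmm]
    field_simp
  rw [key]
  have h1A : B / A^2 ≤ 1 / Real.sqrt Real.pi := by
    have : B / A^2 ≤ A / A^2 := by
      apply div_le_div_of_nonneg_right hBA (by positivity) |>.trans_eq rfl
    rw [show A / A^2 = 1/A by field_simp] at this
    exact this.trans (one_div_le_one_div_of_le hπ hA)
  have h4 : (0:ℝ) < 4^n / s := by positivity
  calc B/A^2 * (4^n/s) ≤ 1/Real.sqrt Real.pi * (4^n/s) :=
        mul_le_mul_of_nonneg_right h1A h4.le
    _ = 4 ^ n / (Real.sqrt Real.pi * s) := by field_simp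

lemma sqrt_telescope (n : ℕ) (hn : 1 ≤ n) :
    1 / (Real.sqrt n * (n+1)) ≤ 2 * (1/Real.sqrt n - 1/Real.sqrt (n+1)) := by
  have hn0 : (0:ℝ) < n := by exact_mod_cast hn
  set a := Real.sqrt n with ha
  set b := Real.sqrt ((n:ℝ)+1) with hb
  have ha0 : 0 < a := Real.sqrt_pos.mpr hn0
  have hb0 : 0 < b := Real.sqrt_pos.mpr (by positivity)
  have ha2 : a^2 = n := Real.sq_sqrt hn0.le
  have hb2 : b^2 = (n:ℝ)+1 := Real.sq_sqrt (by positivity)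
  have hkey : 1 ≤ 2*b^2 - 2*a*b := by nlinarith [sq_nonneg (b-a)]
  have hid : 2*(1/a - 1/b) - 1/(a*((n:ℝ)+1)) = (2*b^2 - 2*a*b - 1)/(a*b^2) := by
    rw [← hb2]
    field_simp
  have hpos : 0 ≤ (2*b^2 - 2*a*b - 1)/(a*b^2) := by
    apply div_nonneg (by linarith) (by positivity)
  linarith [hid ▸ hpos]

lemma catalan_term_bound (n : ℕ) (hn : 1 ≤ n) :
    (catalan n : ℝ) * (1/4)^n ≤ 1/(Real.sqrt Real.pi * Real.sqrt n * (n+1)) := by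
  have hn0 : (0:ℝ) < n := by exact_mod_cast hn
  have hπ : (0:ℝ) < Real.sqrt Real.pi := Real.sqrt_pos.mpr Real.pi_pos
  have hs : (0:ℝ) < Real.sqrt n := Real.sqrt_pos.mpr hn0
  have hcat : (catalan n : ℝ) = (Nat.centralBinom n : ℝ) / ((n:ℝ)+1) := by
    have := succ_mul_catalan_eq_centralBinom n
    have h' : ((n:ℝ)+1) * (catalan n : ℝ) = (Nat.centralBinom n : ℝ) := by
      exact_mod_cast congrArg (Nat.cast : ℕ → ℝ) this
    field_simp [← h']
    linarith
  rw [hcat]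
  have hcb := centralBinom_le n hn
  have h4 : (0:ℝ) < (1/4)^n := by positivity
  calc (Nat.centralBinom n : ℝ) / ((n:ℝ)+1) * (1/4)^n
      ≤ (4 ^ n / (Real.sqrt Real.pi * Real.sqrt n)) / ((n:ℝ)+1) * (1/4)^n := by
        apply mul_le_mul_of_nonneg_right (div_le_div_of_nonneg_right hcb (by positivity)) h4.le
    _ = ((4:ℝ)^n * (1/4)^n) / (Real.sqrt Real.pi * Real.sqrt n * ((n:ℝ)+1)) := by
        rw [div_div, div_mul_eq_mul_div]
    _ = 1/(Real.sqrt Real.pi * Real.sqrt n * ((n:ℝ)+1)) := by rw [← mul_pow]; norm_num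

lemma term_bound (p : ℝ) (hp : 1/2 ≤ p) (hp1 : p ≤ 1) (n : ℕ) (hn : 1 ≤ n) :
    (catalan n : ℝ) * p^n * (1-p)^(n+1)
      ≤ (2*(1-p)/Real.sqrt Real.pi) * (1/Real.sqrt n - 1/Real.sqrt ((n:ℝ)+1)) := by
  set q := 1 - p with hq
  have hq0 : 0 ≤ q := by linarith
  have hπ : (0:ℝ) < Real.sqrt Real.pi := Real.sqrt_pos.mpr Real.pi_pos
  have hn0 : (0:ℝ) < n := by exact_mod_cast hn
  have hs : (0:ℝ) < Real.sqrt n := Real.sqrt_pos.mpr hn0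
  have hpq : p * q ≤ 1/4 := by nlinarith
  have hpq0 : 0 ≤ p * q := by nlinarith
  have h1 : (catalan n : ℝ) * p^n * q^(n+1) = (catalan n : ℝ) * (p*q)^n * q := by
    rw [mul_pow, pow_succ]; ring
  have h2 : (catalan n : ℝ) * (p*q)^n ≤ (catalan n : ℝ) * (1/4)^n := by
    apply mul_le_mul_of_nonneg_left (pow_le_pow_left₀ hpq0 (by linarith) n) (by positivity)
  have h3 := catalan_term_bound n hn
  have h4 := sqrt_telescope n hn
  calc (catalan n : ℝ) * p^n * q^(n+1) = (catalan n : ℝ) * (p*q)^n * q := h1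
    _ ≤ (1/(Real.sqrt Real.pi * Real.sqrt n * ((n:ℝ)+1))) * q := by
        apply mul_le_mul_of_nonneg_right (h2.trans h3) hq0
    _ = (q/Real.sqrt Real.pi) * (1/(Real.sqrt n * ((n:ℝ)+1))) := by
        field_simp
    _ ≤ (q/Real.sqrt Real.pi) * (2 * (1/Real.sqrt n - 1/Real.sqrt ((n:ℝ)+1))) := by
        apply mul_le_mul_of_nonneg_left h4 (by positivity)
    _ = (2*q/Real.sqrt Real.pi) * (1/Real.sqrt n - 1/Real.sqrt ((n:ℝ)+1)) := by ring

lemma sum_term_bound (p : ℝ) (hp : 1/2 ≤ p) (hp1 : p ≤ 1) (m : ℕ) (hm : 1 ≤ m) (N : ℕ) :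
    ∑ ℓ ∈ Finset.range N, (catalan (m+ℓ) : ℝ) * p^(m+ℓ) * (1-p)^(m+ℓ+1)
      ≤ 2*(1-p)/Real.sqrt Real.pi * (1/Real.sqrt m) := by
  have hq0 : (0:ℝ) ≤ 1 - p := by linarith
  have hπ : (0:ℝ) < Real.sqrt Real.pi := Real.sqrt_pos.mpr Real.pi_pos
  set c := 2*(1-p)/Real.sqrt Real.pi with hc
  have hc0 : 0 ≤ c := by positivity
  set g : ℕ → ℝ := fun ℓ => 1/Real.sqrt (m+ℓ) with hg
  have hstep : ∀ ℓ, (catalan (m+ℓ) : ℝ) * p^(m+ℓ) * (1-p)^(m+ℓ+1) ≤ c * (g ℓ - g (ℓ+1)) := by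
    intro ℓ
    have := term_bound p hp hp1 (m+ℓ) (by omega)
    have hcast : Real.sqrt (((m+ℓ:ℕ):ℝ)+1) = Real.sqrt ((m:ℝ)+((ℓ+1:ℕ):ℝ)) := by
      norm_num; push_cast; ring_nf
    calc (catalan (m+ℓ) : ℝ) * p^(m+ℓ) * (1-p)^(m+ℓ+1)
        ≤ (2*(1-p)/Real.sqrt Real.pi) * (1/Real.sqrt (m+ℓ) - 1/Real.sqrt (((m+ℓ:ℕ):ℝ)+1)) := by
          exact_mod_cast this
      _ = c * (g ℓ - g (ℓ+1)) := by
          rw [hcast]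
  calc ∑ ℓ ∈ Finset.range N, (catalan (m+ℓ) : ℝ) * p^(m+ℓ) * (1-p)^(m+ℓ+1)
      ≤ ∑ ℓ ∈ Finset.range N, c * (g ℓ - g (ℓ+1)) := Finset.sum_le_sum fun ℓ _ => hstep ℓ
    _ = c * (g 0 - g N) := by rw [← Finset.mul_sum, Finset.sum_range_sub' g]
    _ ≤ c * g 0 := by
        have : 0 ≤ g N := by positivity
        nlinarith
    _ = c * (1/Real.sqrt m) := by simp [hg]

end AuxR
open DyckStep

def stepToInt : DyckStep → ℤ := fun s => match s with | U => 1 | D => -1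

lemma dyck_of_path (g : ℕ → ℤ) (hg : ∀ k, g k = 1 ∨ g k = -1) (ℓ : ℕ)
    (hpos : ∀ j, j ≤ 2*ℓ → 0 ≤ ∑ k ∈ Finset.Icc 1 j, g k)
    (hzero : (∑ k ∈ Finset.Icc 1 (2*ℓ), g k) = 0) :
    ∃ w : DyckWord, w.semilength = ℓ ∧
      ∀ k, k < 2*ℓ → stepToInt (w.toList.getD k U) = g (k+1) := by
  set L : List DyckStep := (List.range (2*ℓ)).map (fun k => if g (k+1) = 1 then U else D) with hL
  have hlen : L.length = 2*ℓ := by simp [hL]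
  have hget : ∀ k, k < 2*ℓ → L.getD k U = if g (k+1) = 1 then U else D := by
    intro k hk
    rw [List.getD_eq_getElem _ _ (by omega : k < L.length)]
    simp [hL]
  -- key prefix claim
  have claim : ∀ j, j ≤ 2*ℓ →
      ((L.take j).count U : ℤ) - ((L.take j).count D : ℤ) = ∑ k ∈ Finset.Icc 1 j, g k ∧
      ((L.take j).count U) + (L.take j).count D = j := by
    intro j
    induction j with
    | zero => intro _; simp
    | succ j ih =>
      intro hj
      obtain ⟨ih1, ih2⟩ := ih (by omega)
      have hjlen : j < L.length := by omega
      have hval : L[j] = if g (j+1) = 1 then U else D := by simp [hL]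
      have htake : L.take (j+1) = L.take j ++ [if g (j+1) = 1 then U else D] := by
        rw [List.take_succ, List.getElem?_eq_getElem hjlen, hval]
        simp
      have hsum : ∑ k ∈ Finset.Icc 1 (j+1), g k = (∑ k ∈ Finset.Icc 1 j, g k) + g (j+1) :=
        Finset.sum_Icc_succ_top (by omega) g
      rw [htake, hsum]
      rcases hg (j+1) with h1 | h1 <;>
        simp [h1, List.count_append, List.count_singleton'] <;> omega
  constructor
  case w =>
    refine ⟨L, ?_, ?_⟩
    · have := claim (2*ℓ) le_rfl
      rw [List.take_of_length_le (by omega), hzero] at this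
      omega
    · intro i
      rcases le_or_gt i (2*ℓ) with hi | hi
      · have := claim i hi
        have hp := hpos i hi
        omega
      · rw [List.take_of_length_le (by omega)]
        have := claim (2*ℓ) le_rfl
        rw [List.take_of_length_le (by omega), hzero] at this
        omega
  · constructor
    · show L.count U = ℓ
      have := claim (2*ℓ) le_rfl
      rw [List.take_of_length_le (by omega), hzero] at this
      omega
    · intro k hk
      show stepToInt (L.getD k U) = g (k+1)
      rw [hget k hk]
      rcases hg (k+1) with h1 | h1 <;> simp [h1, stepToInt]

lemma list_prod_steps (p : ℝ) (L : List DyckStep) :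
    ∏ j ∈ Finset.range L.length, (if L.getD j U = U then p else 1-p)
      = p ^ L.count U * (1-p) ^ L.count D := by
  induction L with
  | nil => simp
  | cons a L ih =>
    have hlen : (a :: L).length = L.length + 1 := rfl
    rw [hlen, Finset.prod_range_succ']
    simp only [List.getD_cons_succ, List.getD_cons_zero]
    rw [ih]
    rcases a.dichotomy with h | h <;> subst h <;>
      simp [List.count_cons, pow_succ] <;> ring

lemma prod_Icc_one {M : Type*} [CommMonoid M] (f : ℕ → M) (n : ℕ) :
    ∏ k ∈ Finset.Icc 1 n, f k = ∏ j ∈ Finset.range n, f (j+1) := by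
  induction n with
  | zero => simp
  | succ n ih => rw [Finset.prod_Icc_succ_top (by omega), Finset.prod_range_succ, ih]



/-- Discrete-time hitting time tail upper bound: for an i.i.d. ±1 random walk
`V_n = 1 + Σ_{k=1}^n X_k` with upward probability `p ≥ 1/2` and downward probability
`q = 1 − p`, and hitting time `γ = inf{n : V_n = 0}` (valued in `ℕ∞`, `⊤` if the walk
never hits 0), for every `m ≥ 1`:
`ℙ(γ < ∞ and γ ≥ 2m+1) ≤ (1/√π)·(2q/√m)·(1 + 1/(2(m+1)))`. -/
theorem discrete_hitting_time_tail_upper_bound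
    {Ω : Type*} [MeasurableSpace Ω] (μ : Measure Ω) [IsProbabilityMeasure μ]
    (X : ℕ → Ω → ℤ) (hXmeas : ∀ n, Measurable (X n))
    (hindep : iIndepFun X μ)
    (p : ℝ) (hp : 1 / 2 ≤ p) (hp1 : p ≤ 1)
    (hup : ∀ n, μ {ω | X n ω = 1} = ENNReal.ofReal p)
    (hdown : ∀ n, μ {ω | X n ω = -1} = ENNReal.ofReal (1 - p))
    (V : ℕ → Ω → ℤ) (hV : ∀ n ω, V n ω = 1 + ∑ k ∈ Finset.Icc 1 n, X k ω)
    (γ : Ω → ℕ∞) (hγ : ∀ ω, γ ω = sInf {t : ℕ∞ | ∃ n : ℕ, (n : ℕ∞) = t ∧ V n ω = 0})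
    (m : ℕ) (hm : 1 ≤ m) :
    μ {ω | γ ω < ⊤ ∧ ((2 * m + 1 : ℕ) : ℕ∞) ≤ γ ω}
      ≤ ENNReal.ofReal
          ((1 / Real.sqrt Real.pi) * (2 * (1 - p) / Real.sqrt m)
            * (1 + 1 / (2 * (m + 1)))) := by
  have hp0 : 0 < p := by linarith
  have hq0 : 0 ≤ 1 - p := by linarith
  -- the a.s. set where all steps are ±1
  set good : Set Ω := {ω | ∀ k, X k ω = 1 ∨ X k ω = -1} with hgood
  have hnull : μ goodᶜ = 0 := by
    have h1 : goodᶜ = ⋃ k : ℕ, ({ω | X k ω = 1} ∪ {ω | X k ω = -1})ᶜ := by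
      ext ω
      simp [hgood, not_or]
    rw [h1]
    refine measure_iUnion_null fun k => ?_
    have hmeas : MeasurableSet ({ω | X k ω = 1} ∪ {ω | X k ω = -1}) := by
      exact ((hXmeas k) (measurableSet_singleton 1)).union
        ((hXmeas k) (measurableSet_singleton (-1)))
    have hdisj : Disjoint {ω | X k ω = 1} {ω | X k ω = -1} := by
      rw [Set.disjoint_left]
      intro ω h1 h2
      simp only [Set.mem_setOf_eq] at h1 h2
      omega
    have hm2 : MeasurableSet {ω | X k ω = -1} := (hXmeas k) (measurableSet_singleton (-1))
    have hfull : μ ({ω | X k ω = 1} ∪ {ω | X k ω = -1}) = 1 := by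
      rw [measure_union hdisj hm2, hup k, hdown k, ← ENNReal.ofReal_add (by linarith) hq0]
      norm_num
    rw [measure_compl hmeas (by simp [hfull])]
    simp [hfull]
  -- cylinder sets
  set aval : ℕ → DyckWord → ℕ → ℤ :=
    fun ℓ w k => if k = 2*ℓ+1 then -1 else stepToInt (w.toList.getD (k-1) U) with haval
  set Cyl : ℕ → DyckWord → Set Ω :=
    fun ℓ w => ⋂ k ∈ Finset.Icc 1 (2*ℓ+1), X k ⁻¹' {aval ℓ w k} with hCyl
  have havalpm : ∀ ℓ w k, aval ℓ w k = 1 ∨ aval ℓ w k = -1 := by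
    intro ℓ w k
    rw [haval]
    by_cases h : k = 2*ℓ+1
    · simp [h]
    · simp only [h, if_false]
      rcases (w.toList.getD (k-1) U).dichotomy with h' | h' <;> rw [h'] <;> simp [stepToInt]
  -- measure of a cylinder
  have hcyl : ∀ (ℓ : ℕ) (w : DyckWord), w.semilength = ℓ →
      μ (Cyl ℓ w) = ENNReal.ofReal (p^ℓ * (1-p)^(ℓ+1)) := by
    intro ℓ w hw
    have hmeas : ∀ k ∈ Finset.Icc 1 (2*ℓ+1),
        MeasurableSet[MeasurableSpace.comap (X k) inferInstance] (X k ⁻¹' {aval ℓ w k}) :=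
      fun k _ => ⟨{aval ℓ w k}, measurableSet_singleton _, rfl⟩
    rw [hCyl]
    rw [hindep.meas_biInter hmeas]
    have hfac : ∀ k, μ (X k ⁻¹' {aval ℓ w k})
        = ENNReal.ofReal (if aval ℓ w k = 1 then p else 1-p) := by
      intro k
      have hpre : ∀ c : ℤ, X k ⁻¹' ({c} : Set ℤ) = {ω | X k ω = c} := by
        intro c; ext ω; simp
      rcases havalpm ℓ w k with h | h <;> rw [h, hpre]
      · simp [hup k]
      · rw [if_neg (by norm_num), hdown k]
    rw [Finset.prod_congr rfl (fun k _ => hfac k),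
      ← ENNReal.ofReal_prod_of_nonneg (fun k _ => by split <;> linarith)]
    congr 1
    rw [Finset.prod_Icc_succ_top (by omega : 1 ≤ 2*ℓ+1)]
    have htop : (if aval ℓ w (2*ℓ+1) = 1 then p else 1-p) = 1-p := by
      rw [haval]; norm_num
    rw [htop, prod_Icc_one]
    have hbody : ∀ j ∈ Finset.range (2*ℓ),
        (if aval ℓ w (j+1) = 1 then p else 1-p)
          = (if w.toList.getD j U = U then p else 1-p) := by
      intro j hj
      rw [Finset.mem_range] at hj
      have hne : j+1 ≠ 2*ℓ+1 := by omega
      rw [haval]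
      simp only [hne, if_false, Nat.add_sub_cancel]
      rcases (w.toList.getD j U).dichotomy with h' | h' <;> rw [h'] <;> simp [stepToInt]
    rw [Finset.prod_congr rfl hbody]
    have hlen : w.toList.length = 2*ℓ := by rw [← w.two_mul_semilength_eq_length, hw]
    have hcU : w.toList.count U = ℓ := by rw [← hw]; rfl
    have hcD : w.toList.count D = ℓ := by rw [← w.count_U_eq_count_D, hcU]
    rw [← hlen, list_prod_steps, hcU, hcD, pow_succ]
    ring
  -- the inclusion
  have hsub : {ω | γ ω < ⊤ ∧ ((2 * m + 1 : ℕ) : ℕ∞) ≤ γ ω} ∩ good ⊆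
      ⋃ (i : Σ _ℓ : ℕ, {w : DyckWord // w.semilength = m + _ℓ}), Cyl (m + i.1) i.2.1 := by
    rintro ω ⟨⟨hfin, hge⟩, hgoodω⟩
    have hg : ∀ k, X k ω = 1 ∨ X k ω = -1 := hgoodω
    have h0 : V 0 ω = 1 := by rw [hV]; simp
    have hS : ∃ n : ℕ, V n ω = 0 := by
      by_contra hno
      push_neg at hno
      have hT : {t : ℕ∞ | ∃ n : ℕ, (n : ℕ∞) = t ∧ V n ω = 0} = ∅ := by
        ext t; simp only [Set.mem_setOf_eq, Set.mem_empty_iff_false, iff_false]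
        rintro ⟨n, -, hn⟩; exact hno n hn
      rw [hγ ω, hT, sInf_empty] at hfin
      exact absurd hfin (lt_irrefl _)
    set n₀ := Nat.find hS with hn₀def
    have hn₀ : V n₀ ω = 0 := Nat.find_spec hS
    have hmin : ∀ j, j < n₀ → V j ω ≠ 0 := fun j hj => Nat.find_min hS hj
    have hγn : γ ω = (n₀ : ℕ∞) := by
      rw [hγ ω]
      apply le_antisymm
      · exact sInf_le ⟨n₀, rfl, hn₀⟩
      · refine le_sInf ?_
        rintro t ⟨n, rfl, hVn⟩
        exact_mod_cast Nat.find_le hVn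
    have hge' : 2*m+1 ≤ n₀ := by
      rw [hγn] at hge
      exact_mod_cast hge
    have hstep : ∀ j, V (j+1) ω = V j ω + X (j+1) ω := by
      intro j
      rw [hV (j+1), hV j, Finset.sum_Icc_succ_top (by omega : 1 ≤ j+1)]
      ring
    have hposV : ∀ j, j < n₀ → 1 ≤ V j ω := by
      intro j
      induction j with
      | zero => intro _; rw [h0]
      | succ j ih =>
        intro hj
        have h1 := ih (by omega)
        have h2 := hstep j
        have h3 := hmin (j+1) hj
        rcases hg (j+1) with h4 | h4 <;> omega
    have hpar : ∀ j, (V j ω) % 2 = ((j:ℤ)+1) % 2 := by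
      intro j
      induction j with
      | zero => rw [h0]; norm_num
      | succ j ih =>
        have h2 := hstep j
        rcases hg (j+1) with h4 | h4 <;> push_cast <;> omega
    have hodd : ∃ ℓ : ℕ, n₀ = 2*ℓ+1 := by
      have := hpar n₀
      rw [hn₀] at this
      have : ((n₀:ℤ)+1) % 2 = 0 := by omega
      have h2 : (n₀+1) % 2 = 0 := by exact_mod_cast this
      exact ⟨n₀/2, by omega⟩
    obtain ⟨ℓ, hℓ⟩ := hodd
    have hmℓ : m ≤ ℓ := by omega
    have hVtop : V (2*ℓ) ω = 1 := by
      have h1 := hposV (2*ℓ) (by omega)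
      have h2 := hstep (2*ℓ)
      have h3 : V (2*ℓ+1) ω = 0 := by rw [← hℓ]; exact hn₀
      rcases hg (2*ℓ+1) with h4 | h4 <;> omega
    have hXtop : X (2*ℓ+1) ω = -1 := by
      have h2 := hstep (2*ℓ)
      have h3 : V (2*ℓ+1) ω = 0 := by rw [← hℓ]; exact hn₀
      omega
    obtain ⟨w, hw1, hw2⟩ := dyck_of_path (fun k => X k ω) hg ℓ
      (fun j hj => by
        show 0 ≤ ∑ k ∈ Finset.Icc 1 j, X k ω
        have := hposV j (by omega)
        rw [hV] at this
        omega)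
      (by
        show (∑ k ∈ Finset.Icc 1 (2*ℓ), X k ω) = 0
        have := hVtop
        rw [hV] at this
        omega)
    refine Set.mem_iUnion.mpr ⟨⟨ℓ - m, ⟨w, by rw [hw1]; omega⟩⟩, ?_⟩
    have hmd : m + (ℓ - m) = ℓ := by omega
    rw [hCyl]
    simp only [hmd, Set.mem_iInter]
    intro k hk
    rw [Finset.mem_Icc] at hk
    simp only [Set.mem_preimage, Set.mem_singleton_iff, haval]
    by_cases hk2 : k = 2*ℓ+1
    · rw [if_pos hk2, hk2]
      exact hXtop
    · rw [if_neg hk2]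
      have hklt : k - 1 < 2*ℓ := by omega
      have := hw2 (k-1) hklt
      rw [show k - 1 + 1 = k by omega] at this
      exact this.symm
  -- put everything together
  have hcount : ∀ i : (Σ _ℓ : ℕ, {w : DyckWord // w.semilength = m + _ℓ}),
      μ (Cyl (m + i.1) i.2.1) = ENNReal.ofReal (p^(m+i.1) * (1-p)^(m+i.1+1)) :=
    fun i => hcyl (m+i.1) i.2.1 i.2.2
  have hA : μ {ω | γ ω < ⊤ ∧ ((2 * m + 1 : ℕ) : ℕ∞) ≤ γ ω}
      ≤ ∑' (i : Σ _ℓ : ℕ, {w : DyckWord // w.semilength = m + _ℓ}),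
          μ (Cyl (m + i.1) i.2.1) := by
    calc μ {ω | γ ω < ⊤ ∧ ((2 * m + 1 : ℕ) : ℕ∞) ≤ γ ω}
        ≤ μ ({ω | γ ω < ⊤ ∧ ((2 * m + 1 : ℕ) : ℕ∞) ≤ γ ω} ∩ good) + μ goodᶜ := by
          refine le_trans (measure_mono ?_) (measure_union_le _ _)
          intro ω hω
          by_cases h : ω ∈ good
          · exact Or.inl ⟨hω, h⟩
          · exact Or.inr h
      _ = μ ({ω | γ ω < ⊤ ∧ ((2 * m + 1 : ℕ) : ℕ∞) ≤ γ ω} ∩ good) := by rw [hnull, add_zero]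
      _ ≤ μ (⋃ (i : Σ _ℓ : ℕ, {w : DyckWord // w.semilength = m + _ℓ}), Cyl (m + i.1) i.2.1) :=
          measure_mono hsub
      _ ≤ ∑' (i : Σ _ℓ : ℕ, {w : DyckWord // w.semilength = m + _ℓ}), μ (Cyl (m + i.1) i.2.1) :=
          measure_iUnion_le _
  refine hA.trans ?_
  rw [tsum_congr hcount]
  rw [ENNReal.tsum_sigma']
  have htw : ∀ ℓ : ℕ, ∑' (_w : {w : DyckWord // w.semilength = m + ℓ}),
      ENNReal.ofReal (p^(m+ℓ) * (1-p)^(m+ℓ+1))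
        = ENNReal.ofReal ((catalan (m+ℓ) : ℝ) * (p^(m+ℓ) * (1-p)^(m+ℓ+1))) := by
    intro ℓ
    rw [tsum_fintype, Finset.sum_const, Finset.card_univ,
      DyckWord.card_dyckWord_semilength_eq_catalan, nsmul_eq_mul,
      ← ENNReal.ofReal_natCast, ← ENNReal.ofReal_mul (by positivity)]
  rw [tsum_congr htw]
  -- final: bound the tsum by the closed form
  have hbound : ∀ s : Finset ℕ,
      ∑ ℓ ∈ s, ENNReal.ofReal ((catalan (m+ℓ) : ℝ) * (p^(m+ℓ) * (1-p)^(m+ℓ+1)))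
        ≤ ENNReal.ofReal ((1 / Real.sqrt Real.pi) * (2 * (1 - p) / Real.sqrt m)
            * (1 + 1 / (2 * (m + 1)))) := by
    intro s
    obtain ⟨N, hN⟩ : ∃ N, s ⊆ Finset.range N := ⟨(s.sup id)+1, fun x hx =>
      Finset.mem_range.mpr (Nat.lt_succ_of_le (Finset.le_sup (f := id) hx))⟩
    calc ∑ ℓ ∈ s, ENNReal.ofReal ((catalan (m+ℓ) : ℝ) * (p^(m+ℓ) * (1-p)^(m+ℓ+1)))
        ≤ ∑ ℓ ∈ Finset.range N, ENNReal.ofReal ((catalan (m+ℓ) : ℝ) * (p^(m+ℓ) * (1-p)^(m+ℓ+1))) :=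
          Finset.sum_le_sum_of_subset hN
      _ = ENNReal.ofReal (∑ ℓ ∈ Finset.range N, (catalan (m+ℓ) : ℝ) * (p^(m+ℓ) * (1-p)^(m+ℓ+1))) :=
          (ENNReal.ofReal_sum_of_nonneg (fun ℓ _ => by positivity)).symm
      _ ≤ ENNReal.ofReal ((1 / Real.sqrt Real.pi) * (2 * (1 - p) / Real.sqrt m)
            * (1 + 1 / (2 * (m + 1)))) := by
          apply ENNReal.ofReal_le_ofReal
          have h1 : ∑ ℓ ∈ Finset.range N, (catalan (m+ℓ) : ℝ) * (p^(m+ℓ) * (1-p)^(m+ℓ+1))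
              = ∑ ℓ ∈ Finset.range N, (catalan (m+ℓ) : ℝ) * p^(m+ℓ) * (1-p)^(m+ℓ+1) := by
            apply Finset.sum_congr rfl; intros; ring
          rw [h1]
          refine (sum_term_bound p hp hp1 m hm N).trans ?_
          have hπ : (0:ℝ) < Real.sqrt Real.pi := Real.sqrt_pos.mpr Real.pi_pos
          have hm0 : (0:ℝ) < Real.sqrt m := Real.sqrt_pos.mpr (by exact_mod_cast hm)
          have heq : 2*(1-p)/Real.sqrt Real.pi * (1/Real.sqrt m)
              = (1 / Real.sqrt Real.pi) * (2 * (1 - p) / Real.sqrt m) := by ring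
          rw [heq]
          have hfac : (1:ℝ) ≤ 1 + 1 / (2 * ((m:ℝ) + 1)) := by
            have : (0:ℝ) < 2 * ((m:ℝ)+1) := by positivity
            have := one_div_pos.mpr this
            linarith
          nlinarith [mul_nonneg (mul_nonneg (le_of_lt (one_div_pos.mpr hπ)) hq0)
            (le_of_lt (one_div_pos.mpr hm0)),
            div_nonneg (by linarith : (0:ℝ) ≤ 2*(1-p)) hm0.le,
            mul_nonneg (le_of_lt (one_div_pos.mpr hπ))
              (div_nonneg (by linarith : (0:ℝ) ≤ 2*(1-p)) hm0.le)]
  rw [ENNReal.tsum_eq_iSup_sum]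
  exact iSup_le hbound
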